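/- Let A and B be DG free algebras on n degree-one generators with differentials determined by crisscross n-tuples (M^1,...,M^n) and (N^1,...,N^n) respectively. Then A and B are isomorphic as DG algebras if and only if there exists an invertible matrix A = (a_{ij}) ∈ GL_n(k) such that ∑_{j=1}^n a_{ij} N^j = Aᵀ M^i A for every i ∈ {1,...,n}. -/

import Mathlib

open Matrix

/-- The degree-`i` homogeneous component of the free algebra `k⟨x_1,...,x_n⟩`
with all generators in degree `1`: the span of the words of length `i`. -/
noncomputable def deg (k : Type*) [CommRing k] (n : ℕ) (i : ℕ) :
    Submodule k (FreeAlgebra k (Fin n)) :=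
  Submodule.span k
    {w | ∃ f : Fin i → Fin n, w = (List.ofFn fun j => FreeAlgebra.ι k (f j)).prod}

/-- An ordered `n`-tuple `(M^1,…,M^n)` of `n×n` matrices is *crisscross* if
`∑_{l=1}^n [c_j^l r_l^i − c_l^i r_j^l] = 0` for all `i,j`, where `c^i_j` (resp.
`r^i_j`) is the `j`-th column (resp. row) of `M^i`; entrywise this reads
`∑_l (M^l_{a j} M^i_{l b} − M^i_{a l} M^l_{j b}) = 0` for all `i,j,a,b`. -/
def crisscross {k : Type*} [CommRing k] {n : ℕ}
    (M : Fin n → Matrix (Fin n) (Fin n) k) : Prop :=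
  ∀ i j a b : Fin n,
    ∑ l : Fin n, (M l a j * M i l b - M i a l * M l j b) = 0

section Aux

variable {k : Type*} [Field k] {n : ℕ}

local notation "𝔸" => FreeAlgebra k (Fin n)
local notation "x" i => FreeAlgebra.ι k (i : Fin n)

lemma word_mem_deg (l : List (Fin n)) : (l.map (FreeAlgebra.ι k)).prod ∈ deg k n l.length := by
  apply Submodule.subset_span
  refine ⟨fun j => l.get j, ?_⟩
  conv_lhs => rw [← List.ofFn_get l]
  rw [List.map_ofFn]
  rfl

lemma one_mem_deg0 : (1 : 𝔸) ∈ deg k n 0 := by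
  simpa using word_mem_deg (k := k) ([] : List (Fin n))

lemma ι_mem_deg1 (i : Fin n) : FreeAlgebra.ι k i ∈ deg k n 1 := by
  simpa using word_mem_deg (k := k) [i]

lemma deg1_eq : deg k n 1 = Submodule.span k (Set.range (FreeAlgebra.ι k : Fin n → 𝔸)) := by
  unfold deg
  congr 1
  ext w
  constructor
  · rintro ⟨f, rfl⟩; exact ⟨f 0, by simp⟩
  · rintro ⟨i, rfl⟩; exact ⟨fun _ => i, by simp⟩

lemma mul_mem_deg {p q : ℕ} {a b : 𝔸} (ha : a ∈ deg k n p) (hb : b ∈ deg k n q) :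
    a * b ∈ deg k n (p + q) := by
  induction ha using Submodule.span_induction with
  | mem u hu =>
    induction hb using Submodule.span_induction with
    | mem v hv =>
      obtain ⟨f, rfl⟩ := hu
      obtain ⟨g, rfl⟩ := hv
      apply Submodule.subset_span
      refine ⟨Fin.append f g, ?_⟩
      rw [List.ofFn_add, List.prod_append]
      simp [Fin.append_left, Fin.append_right]
    | zero => simp
    | add y z _ _ hy hz => rw [mul_add]; exact add_mem hy hz
    | smul c y _ hy => rw [mul_smul_comm]; exact Submodule.smul_mem _ _ hy
  | zero => simp
  | add y z _ _ hy hz => rw [add_mul]; exact add_mem hy hz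
  | smul c y _ hy => rw [smul_mul_assoc]; exact Submodule.smul_mem _ _ hy

lemma prod_mem_deg (l : List 𝔸) (h : ∀ y ∈ l, y ∈ deg k n 1) :
    l.prod ∈ deg k n l.length := by
  induction l with
  | nil => simpa using one_mem_deg0 (k := k) (n := n)
  | cons a l ih =>
    rw [List.prod_cons, List.length_cons]
    have := mul_mem_deg (h a (by simp)) (ih fun y hy => h y (by simp [hy]))
    rwa [Nat.add_comm] at this

lemma E_ι (i : Fin n) :
    FreeAlgebra.equivMonoidAlgebraFreeMonoid (FreeAlgebra.ι k i) =
      MonoidAlgebra.single (FreeMonoid.of i) (1 : k) := by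
  simp [FreeAlgebra.equivMonoidAlgebraFreeMonoid]

lemma pair_eq_iff (a b a₀ b₀ : Fin n) :
    (FreeMonoid.of a * FreeMonoid.of b = FreeMonoid.of a₀ * FreeMonoid.of b₀) ↔
      (a = a₀ ∧ b = b₀) := by
  constructor
  · intro h
    have := congrArg FreeMonoid.toList h
    simpa using this
  · rintro ⟨rfl, rfl⟩; rfl

noncomputable def ev (pt : FreeMonoid (Fin n)) :
    MonoidAlgebra k (FreeMonoid (Fin n)) →ₗ[k] k :=
  Finsupp.lapply pt ∘ₗ (MonoidAlgebra.coeffLinearEquiv k).toLinearMap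

open scoped Classical in
lemma ev_single (pt l : FreeMonoid (Fin n)) (v : k) :
    ev pt (MonoidAlgebra.single l v) = if l = pt then v else 0 := by
  classical
  show (Finsupp.single l v) pt = _
  rw [Finsupp.single_apply]

lemma pair_key (c : Fin n → Fin n → k) (a₀ b₀ : Fin n) :
    ev (FreeMonoid.of a₀ * FreeMonoid.of b₀) (FreeAlgebra.equivMonoidAlgebraFreeMonoid
        (∑ a, ∑ b, c a b • (FreeAlgebra.ι k a * FreeAlgebra.ι k b))) = c a₀ b₀ := by
  rw [map_sum]
  simp only [map_sum, _root_.map_smul, _root_.map_mul, E_ι,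
    MonoidAlgebra.single_mul_single, one_mul, ev_single, pair_eq_iff,
    smul_eq_mul, mul_ite, mul_one, mul_zero, ite_and]
  simp

lemma pair_coeff {c c' : Fin n → Fin n → k}
    (h : (∑ a, ∑ b, c a b • (FreeAlgebra.ι k a * FreeAlgebra.ι k b) : 𝔸) =
      ∑ a, ∑ b, c' a b • (FreeAlgebra.ι k a * FreeAlgebra.ι k b)) :
    ∀ a b, c a b = c' a b := by
  intro a b
  rw [← pair_key c a b, ← pair_key c' a b, h]

lemma ι_coeff {c : Fin n → k}
    (h : (∑ i, c i • FreeAlgebra.ι k i : 𝔸) = 0) : c = 0 := by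
  funext i₀
  have := congrArg (fun z => ev (FreeMonoid.of i₀) (FreeAlgebra.equivMonoidAlgebraFreeMonoid z)) h
  simpa [map_sum, _root_.map_smul, E_ι, ev_single, FreeMonoid.of_injective.eq_iff] using this

lemma d_one_eq_zero (d : 𝔸 →ₗ[k] 𝔸)
    (hL : ∀ (p : ℕ) (a b : 𝔸), a ∈ deg k n p →
      d (a * b) = d a * b + ((-1 : k) ^ p) • (a * d b)) : d 1 = 0 := by
  have h := hL 0 1 1 one_mem_deg0
  simp at h
  exact h

lemma span_words_top :
    Submodule.span k {w : 𝔸 | ∃ l : List (Fin n), w = (l.map (FreeAlgebra.ι k)).prod} = ⊤ := by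
  rw [eq_top_iff]
  rintro a -
  induction a with
  | grade0 r =>
    rw [Algebra.algebraMap_eq_smul_one]
    exact Submodule.smul_mem _ _ (Submodule.subset_span ⟨[], by simp⟩)
  | grade1 i => exact Submodule.subset_span ⟨[i], by simp⟩
  | add a b ha hb => exact add_mem ha hb
  | mul a b ha hb =>
    induction ha using Submodule.span_induction with
    | mem u hu =>
      induction hb using Submodule.span_induction with
      | mem v hv =>
        obtain ⟨l1, rfl⟩ := hu
        obtain ⟨l2, rfl⟩ := hv
        exact Submodule.subset_span ⟨l1 ++ l2, by simp⟩
      | zero => simp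
      | add y z _ _ hy hz => rw [mul_add]; exact add_mem hy hz
      | smul c y _ hy => rw [mul_smul_comm]; exact Submodule.smul_mem _ _ hy
    | zero => simp
    | add y z _ _ hy hz => rw [add_mul]; exact add_mem hy hz
    | smul c y _ hy => rw [smul_mul_assoc]; exact Submodule.smul_mem _ _ hy

end Aux

section Aux2
variable {k : Type*} [Field k] {n : ℕ}
local notation "𝔸" => FreeAlgebra k (Fin n)

lemma expand_d (d : 𝔸 →ₗ[k] 𝔸) (Nm : Fin n → Matrix (Fin n) (Fin n) k)
    (hval : ∀ i, d (FreeAlgebra.ι k i) =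
      ∑ a, ∑ b, Nm i a b • (FreeAlgebra.ι k a * FreeAlgebra.ι k b)) (c : Fin n → k) :
    d (∑ j, c j • FreeAlgebra.ι k j) =
      ∑ a, ∑ b, (∑ j, c j * Nm j a b) • (FreeAlgebra.ι k a * FreeAlgebra.ι k b) := by
  rw [map_sum]
  simp only [_root_.map_smul, hval, Finset.smul_sum, smul_smul, Finset.sum_smul]
  rw [Finset.sum_comm]
  exact Finset.sum_congr rfl fun a _ => Finset.sum_comm

lemma expand_f (g : 𝔸 →ₐ[k] 𝔸) (A : Matrix (Fin n) (Fin n) k)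
    (hg : ∀ i, g (FreeAlgebra.ι k i) = ∑ j, A i j • FreeAlgebra.ι k j)
    (Mi : Matrix (Fin n) (Fin n) k) :
    g (∑ a, ∑ b, Mi a b • (FreeAlgebra.ι k a * FreeAlgebra.ι k b)) =
      ∑ c, ∑ d, (Aᵀ * Mi * A) c d • (FreeAlgebra.ι k c * FreeAlgebra.ι k d) := by
  rw [map_sum]
  simp only [map_sum, _root_.map_smul, _root_.map_mul, hg, Finset.sum_mul, Finset.mul_sum,
    smul_mul_smul_comm, Finset.smul_sum, smul_smul, Matrix.mul_apply, Matrix.transpose_apply,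
    Finset.sum_smul]
  have key : ∀ G : Fin n → Fin n → Fin n → Fin n → FreeAlgebra k (Fin n),
      (∑ a : Fin n, ∑ b : Fin n, ∑ c : Fin n, ∑ d : Fin n, G a b c d)
        = ∑ q : Fin n × Fin n × Fin n × Fin n, G q.1 q.2.1 q.2.2.1 q.2.2.2 := by
    intro G
    simp only [Fintype.sum_prod_type]
  rw [key (fun a b u v => (Mi a b * (A a v * A b u)) • (FreeAlgebra.ι k v * FreeAlgebra.ι k u)),
    key (fun c d b a => (A a c * Mi a b * A b d) • (FreeAlgebra.ι k c * FreeAlgebra.ι k d))]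
  refine Fintype.sum_equiv ⟨fun q => (q.2.2.2, q.2.2.1, q.2.1, q.1),
    fun q => (q.2.2.2, q.2.2.1, q.2.1, q.1), fun q => rfl, fun q => rfl⟩ _ _ ?_
  rintro ⟨a, b, u, v⟩
  dsimp
  congr 1
  ring

lemma lift_comp_eq_id (P Q : Matrix (Fin n) (Fin n) k) (h : Q * P = 1) :
    (FreeAlgebra.lift k (fun i => ∑ j, P i j • FreeAlgebra.ι k j)).comp
      (FreeAlgebra.lift k (fun i => ∑ j, Q i j • FreeAlgebra.ι k j)) =
        AlgHom.id k 𝔸 := by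
  apply FreeAlgebra.hom_ext
  funext i
  simp only [Function.comp_apply, AlgHom.coe_comp, AlgHom.coe_id, id_eq,
    FreeAlgebra.lift_ι_apply, map_sum, _root_.map_smul, Finset.smul_sum, smul_smul]
  rw [Finset.sum_comm]
  have : ∀ l : Fin n, ∑ j : Fin n, Q i j * P j l = (1 : Matrix (Fin n) (Fin n) k) i l := by
    intro l; rw [← h, Matrix.mul_apply]
  calc ∑ l : Fin n, ∑ j : Fin n, (Q i j * P j l) • FreeAlgebra.ι k l
      = ∑ l : Fin n, (1 : Matrix (Fin n) (Fin n) k) i l • FreeAlgebra.ι k l := by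
        refine Finset.sum_congr rfl fun l _ => ?_
        rw [← Finset.sum_smul, this l]
    _ = FreeAlgebra.ι k i := by
        simp [Matrix.one_apply, ite_smul]

end Aux2

/-- let `A` and `B` be the DG free algebras on `n` degree-one
generators whose differentials `d₁, d₂` are determined by the crisscross
tuples `(M¹,…,Mⁿ)` and `(N¹,…,Nⁿ)`.  Then `A ≅ B` as DG algebras (i.e.
there is a graded algebra automorphism of the free algebra intertwining the
differentials) iff there is `A ∈ GLₙ(k)` with `∑_j a_{ij} Nʲ = Aᵀ Mⁱ A` for
every `i`. -/
theorem stmt2 {k : Type*} [Field k] [CharZero k] [IsAlgClosed k] (n : ℕ)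
    (M N : Fin n → Matrix (Fin n) (Fin n) k)
    (hM : crisscross M) (hN : crisscross N)
    (d1 d2 : FreeAlgebra k (Fin n) →ₗ[k] FreeAlgebra k (Fin n))
    (hL1 : ∀ (p : ℕ) (a b : FreeAlgebra k (Fin n)), a ∈ deg k n p →
      d1 (a * b) = d1 a * b + ((-1 : k) ^ p) • (a * d1 b))
    (hL2 : ∀ (p : ℕ) (a b : FreeAlgebra k (Fin n)), a ∈ deg k n p →
      d2 (a * b) = d2 a * b + ((-1 : k) ^ p) • (a * d2 b))
    (hval1 : ∀ i, d1 (FreeAlgebra.ι k i) =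
      ∑ a : Fin n, ∑ b : Fin n, M i a b • (FreeAlgebra.ι k a * FreeAlgebra.ι k b))
    (hval2 : ∀ i, d2 (FreeAlgebra.ι k i) =
      ∑ a : Fin n, ∑ b : Fin n, N i a b • (FreeAlgebra.ι k a * FreeAlgebra.ι k b)) :
    (∃ f : FreeAlgebra k (Fin n) ≃ₐ[k] FreeAlgebra k (Fin n),
      (∀ (i : ℕ), ∀ a ∈ deg k n i, f a ∈ deg k n i) ∧
      (∀ a, f (d1 a) = d2 (f a))) ↔
    (∃ A : Matrix (Fin n) (Fin n) k, IsUnit A.det ∧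
      ∀ i, (∑ j, A i j • N j) = Aᵀ * M i * A) := by
    classical
  constructor
  · rintro ⟨f, hgr, hcomm⟩
    have h1 : ∀ i, f (FreeAlgebra.ι k i) ∈
        Submodule.span k (Set.range (FreeAlgebra.ι k : Fin n → FreeAlgebra k (Fin n))) := by
      intro i; rw [← deg1_eq]; exact hgr 1 _ (ι_mem_deg1 i)
    choose c hc using fun i => (Submodule.mem_span_range_iff_exists_fun k).mp (h1 i)
    have hfι : ∀ i, f.toAlgHom (FreeAlgebra.ι k i) =
        ∑ j, (Matrix.of c) i j • FreeAlgebra.ι k j := by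
      intro i; exact (hc i).symm
    refine ⟨Matrix.of c, ?_, ?_⟩
    · rw [← Matrix.isUnit_iff_isUnit_det, ← Matrix.vecMul_injective_iff_isUnit]
      have hker : ∀ v : Fin n → k, Matrix.vecMul v (Matrix.of c) = 0 → v = 0 := by
        intro v hv
        have hz : f (∑ i, v i • FreeAlgebra.ι k i) = 0 := by
          rw [map_sum]
          simp only [_root_.map_smul]
          calc ∑ i, v i • f (FreeAlgebra.ι k i)
              = ∑ i, v i • ∑ j, c i j • FreeAlgebra.ι k j := by
                refine Finset.sum_congr rfl fun i _ => ?_; rw [hc i]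
            _ = ∑ j, (∑ i, v i * c i j) • FreeAlgebra.ι k j := by
                simp only [Finset.smul_sum, smul_smul, Finset.sum_smul]
                exact Finset.sum_comm
            _ = 0 := by
                refine Finset.sum_eq_zero fun j _ => ?_
                have : Matrix.vecMul v (Matrix.of c) j = 0 := by rw [hv]; rfl
                rw [Matrix.vecMul, dotProduct] at this
                simp only [Matrix.of_apply] at this
                rw [this, zero_smul]
        have h0 : (∑ i, v i • FreeAlgebra.ι k i : FreeAlgebra k (Fin n)) = 0 := by
          apply f.injective
          rw [hz, map_zero]
        exact ι_coeff h0
      intro v w hvw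
      have := hker (v - w) (by rw [Matrix.sub_vecMul, show v ᵥ* Matrix.of c = w ᵥ* Matrix.of c from hvw, sub_self])
      exact sub_eq_zero.mp this
    · intro i
      have h2 := hcomm (FreeAlgebra.ι k i)
      rw [hval1 i] at h2
      have e1 : f (∑ a, ∑ b, M i a b • (FreeAlgebra.ι k a * FreeAlgebra.ι k b)) =
          ∑ a, ∑ b, ((Matrix.of c)ᵀ * M i * (Matrix.of c)) a b •
            (FreeAlgebra.ι k a * FreeAlgebra.ι k b) :=
        expand_f f.toAlgHom (Matrix.of c) hfι (M i)
      have e2 : d2 (f (FreeAlgebra.ι k i)) =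
          ∑ a, ∑ b, (∑ j, (Matrix.of c) i j * N j a b) •
            (FreeAlgebra.ι k a * FreeAlgebra.ι k b) := by
        rw [← hc i]
        exact expand_d d2 N hval2 (c i)
      rw [e1, e2] at h2
      have h3 := pair_coeff h2
      ext a b
      rw [Matrix.sum_apply]
      simp only [Matrix.smul_apply, smul_eq_mul]
      exact (h3 a b).symm
  · rintro ⟨A, hdet, hAN⟩
    have hQP : A⁻¹ * A = 1 := Matrix.nonsing_inv_mul A hdet
    have hPQ : A * A⁻¹ = 1 := Matrix.mul_nonsing_inv A hdet
    set φ : FreeAlgebra k (Fin n) →ₐ[k] FreeAlgebra k (Fin n) :=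
      FreeAlgebra.lift k (fun i => ∑ j, A i j • FreeAlgebra.ι k j) with hφ
    set ψ : FreeAlgebra k (Fin n) →ₐ[k] FreeAlgebra k (Fin n) :=
      FreeAlgebra.lift k (fun i => ∑ j, A⁻¹ i j • FreeAlgebra.ι k j) with hψ
    set f : FreeAlgebra k (Fin n) ≃ₐ[k] FreeAlgebra k (Fin n) :=
      AlgEquiv.ofAlgHom φ ψ (lift_comp_eq_id A A⁻¹ hQP) (lift_comp_eq_id A⁻¹ A hPQ) with hf
    have hfι : ∀ i, f (FreeAlgebra.ι k i) = ∑ j, A i j • FreeAlgebra.ι k j := by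
      intro i
      show φ (FreeAlgebra.ι k i) = _
      rw [hφ, FreeAlgebra.lift_ι_apply]
    have hfι' : ∀ i, f.toAlgHom (FreeAlgebra.ι k i) = ∑ j, A i j • FreeAlgebra.ι k j :=
      fun i => hfι i
    have hfdeg1 : ∀ i, f (FreeAlgebra.ι k i) ∈ deg k n 1 := by
      intro i
      rw [hfι i, deg1_eq]
      exact Submodule.sum_mem _ fun j _ =>
        Submodule.smul_mem _ _ (Submodule.subset_span ⟨j, rfl⟩)
    have hgen : ∀ i, f (d1 (FreeAlgebra.ι k i)) = d2 (f (FreeAlgebra.ι k i)) := by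
      intro i
      rw [hval1 i]
      have e1 : f (∑ a, ∑ b, M i a b • (FreeAlgebra.ι k a * FreeAlgebra.ι k b)) =
          ∑ a, ∑ b, (Aᵀ * M i * A) a b • (FreeAlgebra.ι k a * FreeAlgebra.ι k b) :=
        expand_f f.toAlgHom A hfι' (M i)
      have e2 : d2 (f (FreeAlgebra.ι k i)) =
          ∑ a, ∑ b, (∑ j, A i j * N j a b) •
            (FreeAlgebra.ι k a * FreeAlgebra.ι k b) := by
        rw [hfι i]
        exact expand_d d2 N hval2 (A i)
      rw [e1, e2, ← hAN i]
      refine Finset.sum_congr rfl fun a _ => Finset.sum_congr rfl fun b _ => ?_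
      congr 1
      rw [Matrix.sum_apply]
      simp only [Matrix.smul_apply, smul_eq_mul]
    refine ⟨f, ?_, ?_⟩
    · intro i a ha
      have hle : deg k n i ≤ (deg k n i).comap f.toLinearMap := by
        refine Submodule.span_le.mpr ?_
        rintro w ⟨g0, rfl⟩
        simp only [SetLike.mem_coe, Submodule.mem_comap, AlgEquiv.toLinearMap_apply]
        rw [map_list_prod, List.map_ofFn]
        have hm := prod_mem_deg (List.ofFn (⇑f ∘ fun j => FreeAlgebra.ι k (g0 j)))
          (by
            intro y hy
            rw [List.mem_ofFn] at hy
            obtain ⟨j, rfl⟩ := hy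
            exact hfdeg1 (g0 j))
        simpa [List.length_ofFn] using hm
      exact hle ha
    · have hwords : ∀ l : List (Fin n),
          f (d1 ((l.map (FreeAlgebra.ι k)).prod)) = d2 (f ((l.map (FreeAlgebra.ι k)).prod)) := by
        intro l
        induction l with
        | nil =>
          simp [d_one_eq_zero d1 hL1, d_one_eq_zero d2 hL2]
        | cons i l ih =>
          rw [List.map_cons, List.prod_cons]
          rw [hL1 1 _ _ (ι_mem_deg1 i)]
          rw [map_add, _root_.map_mul, _root_.map_smul, _root_.map_mul]
          rw [hgen i, ih]
          rw [_root_.map_mul]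
          rw [hL2 1 _ _ (hfdeg1 i)]
      intro a
      have htop : Submodule.span k
          {w : FreeAlgebra k (Fin n) | ∃ l : List (Fin n), w = (l.map (FreeAlgebra.ι k)).prod} ≤
            LinearMap.eqLocus (f.toLinearMap ∘ₗ d1) (d2 ∘ₗ f.toLinearMap) := by
        refine Submodule.span_le.mpr ?_
        rintro w ⟨l, rfl⟩
        show (f.toLinearMap ∘ₗ d1) _ = (d2 ∘ₗ f.toLinearMap) _
        simpa using hwords l
      have ha : a ∈ Submodule.span k
          {w : FreeAlgebra k (Fin n) | ∃ l : List (Fin n), w = (l.map (FreeAlgebra.ι k)).prod} := by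
        rw [span_words_top]; trivial
      have := htop ha
      simpa using this
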